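/- Let D be a triangulated category and let D₁ ⊆ D be a full triangulated subcategory whose inclusion functor i_* : D₁ → D (fully faithful) admits a right adjoint i^!. Then the inclusion functor j_* : D₁^⊥ → D of the right orthogonal admits a left adjoint j^*, and for every object A of D there is a distinguished triangle i_* i^! A → A → j_* j^* A → (i_* i^! A)[1], functorial in A, whose first map is the counit of the adjunction i_* ⊣ i^! and whose second map is the unit of the adjunction j^* ⊣ j_*. -/

import Mathlib

/-!
STATEMENT 1: If `D₁ ⊆ D` is a full triangulated subcategory whose (fully faithful)
inclusion `i_* : D₁ → D` admits a right adjoint `i^!`, then the inclusion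
`j_* : D₁^⊥ → D` of the right orthogonal admits a left adjoint `j^*`, and for every
`A` there is a distinguished triangle `i_* i^! A → A → j_* j^* A → (i_* i^! A)[1]`,
functorial in `A`, whose first map is the counit of `i_* ⊣ i^!` and whose second map
is the unit of `j^* ⊣ j_*`.

The full triangulated subcategory `D₁` is encoded by a predicate `P` on objects,
closed under isomorphism, zero objects, shifts, and extensions; the inclusion is
`fullSubcategoryInclusion P`, whose right adjoint is given as an adjunction
`adji : ObjectProperty.ι P ⊣ ishriek`.
The right orthogonal `D₁^⊥` is the full subcategory of objects `A` with every map
`B ⟶ A`, `B ∈ D₁`, zero.  Functoriality of the triangles is encoded by asking for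
the connecting maps to form a natural transformation `δ`.
-/

open CategoryTheory CategoryTheory.Limits CategoryTheory.Pretriangulated

noncomputable section

universe v u

theorem gluing_triangle_right_adjoint
    {D : Type u} [Category.{v} D] [Preadditive D] [HasZeroObject D] [HasShift D ℤ]
    [∀ n : ℤ, (CategoryTheory.shiftFunctor D n).Additive] [Pretriangulated D]
    [IsTriangulated D]
    (P : D → Prop)
    (hP_zero : ∀ X : D, IsZero X → P X)
    (hP_iso : ∀ {X Y : D}, (X ≅ Y) → P X → P Y)
    (hP_shift : ∀ (X : D) (n : ℤ), P X → P (X⟦n⟧))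
    (hP_ext : ∀ T ∈ distTriang D, P T.obj₁ → P T.obj₃ → P T.obj₂)
    (ishriek : D ⥤ ObjectProperty.FullSubcategory P)
    (adji : ObjectProperty.ι P ⊣ ishriek) :
    ∃ (jstar : D ⥤ ObjectProperty.FullSubcategory fun A : D => ∀ B : D, P B → ∀ f : B ⟶ A, f = 0)
      (adjj : jstar ⊣ ObjectProperty.ι (fun A : D => ∀ B : D, P B → ∀ f : B ⟶ A, f = 0))
      (δ : (jstar ⋙ ObjectProperty.ι
              (fun A : D => ∀ B : D, P B → ∀ f : B ⟶ A, f = 0)) ⟶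
        (ishriek ⋙ ObjectProperty.ι P) ⋙ CategoryTheory.shiftFunctor D (1 : ℤ)),
      ∀ A : D,
        Triangle.mk (adji.counit.app A) (adjj.unit.app A) (δ.app A) ∈ distTriang D := by
  classical
  set orth : D → Prop := fun A : D => ∀ B : D, P B → ∀ f : B ⟶ A, f = 0 with horthdef
  -- choose cones on the counits
  choose Q π δ0 hT using fun A : D =>
    Pretriangulated.distinguished_cocone_triangle (adji.counit.app A)
  -- composition with the counit is bijective on maps from objects of `P`
  have bij : ∀ (A X : D) (hX : P X), Function.Bijective
      (fun g : X ⟶ (ObjectProperty.ι P).obj (ishriek.obj A) =>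
        g ≫ adji.counit.app A) := by
    intro A X hX
    have : (fun g : X ⟶ (ObjectProperty.ι P).obj (ishriek.obj A) =>
        g ≫ adji.counit.app A) =
        fun g => (adji.homEquiv (⟨X, hX⟩ : ObjectProperty.FullSubcategory P) A).symm (ObjectProperty.homMk g) := by
      funext g
      rw [Adjunction.homEquiv_counit]
      rfl
    rw [this]
    exact (adji.homEquiv _ _).symm.bijective.comp
      ⟨fun a b h => congrArg (fun k => k.hom) h, ObjectProperty.homMk_surjective⟩
  -- the cones are in the right orthogonal
  have horth : ∀ A : D, orth (Q A) := by
    intro A B hB f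
    have h3 : f ≫ δ0 A = 0 := by
      set adjS := (shiftEquiv' D (-1 : ℤ) (1 : ℤ) (by ring)).toAdjunction
      have hnat := Adjunction.homEquiv_naturality_right_symm adjS
        (X := B) (f := f ≫ δ0 A) (g := adji.counit.app A)
      have hz : (f ≫ δ0 A) ≫ (shiftEquiv' D (-1 : ℤ) (1 : ℤ)
          (by ring)).inverse.map (adji.counit.app A) = 0 := by
        show (f ≫ δ0 A) ≫ (shiftFunctor D (1 : ℤ)).map (adji.counit.app A) = 0
        rw [Category.assoc]
        have := Pretriangulated.comp_distTriang_mor_zero₃₁ _ (hT A)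
        dsimp at this
        exact (congrArg (fun k => f ≫ k) this).trans comp_zero
      have h0 : (adjS.homEquiv B _).symm (f ≫ δ0 A) ≫ adji.counit.app A = 0 := by
        rw [← hnat]
        refine (congrArg (adjS.homEquiv B _).symm hz).trans ?_
        show (adjS.homEquiv B _).symm 0 = 0
        rw [Adjunction.homEquiv_counit]
        show (shiftFunctor D (-1 : ℤ)).map 0 ≫ adjS.counit.app _ = 0
        rw [Functor.map_zero]
        exact zero_comp
      have hsymm : (adjS.homEquiv B _).symm (f ≫ δ0 A) = 0 := by
        apply (bij A _ (hP_shift B (-1) hB)).1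
        exact h0.trans zero_comp.symm
      have hEq : f ≫ δ0 A = (adjS.homEquiv B _) 0 := (Equiv.symm_apply_eq _).mp hsymm
      rw [hEq, Adjunction.homEquiv_apply]
      show adjS.unit.app B ≫ (shiftFunctor D (1 : ℤ)).map 0 = 0
      rw [Functor.map_zero]
      exact comp_zero
    obtain ⟨g, hg⟩ := Pretriangulated.Triangle.coyoneda_exact₃ _ (hT A) f h3
    obtain ⟨h, hh⟩ := (bij A B hB).2 g
    dsimp at hg hh
    have h12 := Pretriangulated.comp_distTriang_mor_zero₁₂ _ (hT A)
    dsimp at h12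
    rw [hg, ← hh]
    exact (Category.assoc _ _ _).trans ((congrArg (fun k => h ≫ k) h12).trans comp_zero)
  -- composition with `π A` is bijective onto maps to orthogonal objects
  have hequiv : ∀ (A : D) (Y : ObjectProperty.FullSubcategory orth),
      Function.Bijective (fun g : Q A ⟶ Y.obj => π A ≫ g) := by
    intro A Y
    constructor
    · intro u v huv
      dsimp at huv
      have hsub : π A ≫ (u - v) = 0 := by
        rw [Preadditive.comp_sub, huv, sub_self]
      obtain ⟨w, hw⟩ := Pretriangulated.Triangle.yoneda_exact₃ _ (hT A) (u - v) hsub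
      have hw0 : w = 0 := Y.property _
        (hP_shift _ 1 (ishriek.obj A).property) w
      rw [hw0, comp_zero] at hw
      exact sub_eq_zero.1 hw
    · intro f
      have h0 : adji.counit.app A ≫ f = 0 :=
        Y.property _ (ishriek.obj A).property _
      obtain ⟨g, hg⟩ := Pretriangulated.Triangle.yoneda_exact₂ _ (hT A) f h0
      exact ⟨g, hg.symm⟩
  -- construct the left adjoint
  let e : ∀ (A : D) (Y : ObjectProperty.FullSubcategory orth),
      ((⟨Q A, horth A⟩ : ObjectProperty.FullSubcategory orth) ⟶ Y) ≃
        (A ⟶ (ObjectProperty.ι orth).obj Y) :=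
    fun A Y => InducedCategory.homEquiv.trans (Equiv.ofBijective _ (hequiv A Y))
  have he : ∀ (A : D) (Y Y' : ObjectProperty.FullSubcategory orth) (g : Y ⟶ Y')
      (h : (⟨Q A, horth A⟩ : ObjectProperty.FullSubcategory orth) ⟶ Y),
      e A Y' (h ≫ g) = e A Y h ≫ (ObjectProperty.ι orth).map g := by
    intro A Y Y' g h
    exact (Category.assoc _ _ _).symm
  let jstar : D ⥤ ObjectProperty.FullSubcategory orth := Adjunction.leftAdjointOfEquiv e he
  let adjj : jstar ⊣ ObjectProperty.ι orth := Adjunction.adjunctionOfEquivLeft e he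
  have hunit : ∀ A : D, adjj.unit.app A = π A := by
    intro A
    show e A _ (𝟙 _) = π A
    show π A ≫ 𝟙 _ = π A
    simp
  -- naturality of jstar.map through π
  have hjmap : ∀ {A A' : D} (f : A ⟶ A'),
      π A ≫ (ObjectProperty.ι orth).map (jstar.map f) = f ≫ π A' := by
    intro A A' f
    have := adjj.unit.naturality f
    dsimp at this
    rw [hunit, hunit] at this
    exact this.symm
  refine ⟨jstar, adjj, ⟨fun A => δ0 A, ?_⟩, ?_⟩
  · intro A A' f
    obtain ⟨c, hc1, hc2⟩ := Pretriangulated.complete_distinguished_triangle_morphism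
      _ _ (hT A) (hT A')
      ((ObjectProperty.ι P).map (ishriek.map f)) f (adji.counit.naturality f).symm
    have hc : (ObjectProperty.ι orth).map (jstar.map f) = c := by
      apply (hequiv A ⟨Q A', horth A'⟩).1
      show π A ≫ (ObjectProperty.ι orth).map (jstar.map f) = π A ≫ c
      rw [hjmap f]
      exact hc1.symm
    show (ObjectProperty.ι orth).map (jstar.map f) ≫ δ0 A' =
      δ0 A ≫ (shiftFunctor D (1 : ℤ)).map ((ObjectProperty.ι P).map (ishriek.map f))
    rw [hc]
    exact hc2.symm
  · intro A
    have : Triangle.mk (adji.counit.app A) (adjj.unit.app A) (δ0 A) =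
        Triangle.mk (adji.counit.app A) (π A) (δ0 A) := by
      rw [hunit]
    exact this ▸ hT A

end
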